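/- Let G be an arbitrary group and let A be a finite subset of G which does not contain any left coset or right coset of any nontrivial proper finite subgroup of G. Then for every finite subset B of G with |A| = |B| and e ∉ B, there exists a matching from A to B. -/

import Mathlib

open Finset Function MulOpposite Subgroup
open scoped Pointwise

section OlsonAux

variable {α : Type*} [Group α] [DecidableEq α] {x y : Finset α × Finset α} {s t : Finset α}

/-- `C` contains a left or right coset of a nontrivial finite subgroup. -/
def HasCoset (C : Finset α) : Prop :=
  ∃ H : Subgroup α, (H : Set α).Finite ∧ H ≠ ⊥ ∧
    ∃ z : α, ((z * ·) '' (H : Set α) ⊆ (C : Set α) ∨ (· * z) '' (H : Set α) ⊆ (C : Set α))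

lemma HasCoset.mono {C D : Finset α} (hCD : C ⊆ D) (h : HasCoset C) : HasCoset D := by
  obtain ⟨H, h1, h2, z, h3 | h3⟩ := h
  · exact ⟨H, h1, h2, z, Or.inl (h3.trans (Finset.coe_subset.2 hCD))⟩
  · exact ⟨H, h1, h2, z, Or.inr (h3.trans (Finset.coe_subset.2 hCD))⟩

lemma HasCoset.of_inv {C : Finset α} (h : HasCoset C⁻¹) : HasCoset C := by
  obtain ⟨H, h1, h2, z, h3 | h3⟩ := h
  · refine ⟨H, h1, h2, z⁻¹, Or.inr ?_⟩
    rintro _ ⟨k, hk, rfl⟩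
    have hm : z * k⁻¹ ∈ ((C⁻¹ : Finset α) : Set α) := h3 ⟨k⁻¹, inv_mem hk, rfl⟩
    rw [Finset.coe_inv, Set.mem_inv] at hm
    simpa [mul_inv_rev] using hm
  · refine ⟨H, h1, h2, z⁻¹, Or.inl ?_⟩
    rintro _ ⟨k, hk, rfl⟩
    have hm : k⁻¹ * z ∈ ((C⁻¹ : Finset α) : Set α) := h3 ⟨k⁻¹, inv_mem hk, rfl⟩
    rw [Finset.coe_inv, Set.mem_inv] at hm
    simpa [mul_inv_rev] using hm

private def DevosMulRel' : Finset α × Finset α → Finset α × Finset α → Prop :=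
  Prod.Lex (· < ·) (Prod.Lex (· > ·) (· < ·)) on fun x ↦ (#(x.1 * x.2), #x.1 + #x.2, #x.1)

private lemma devosMulRel'_iff :
    DevosMulRel' x y ↔
      #(x.1 * x.2) < #(y.1 * y.2) ∨
        #(x.1 * x.2) = #(y.1 * y.2) ∧ #y.1 + #y.2 < #x.1 + #x.2 ∨
          #(x.1 * x.2) = #(y.1 * y.2) ∧ #x.1 + #x.2 = #y.1 + #y.2 ∧ #x.1 < #y.1 := by
  simp [DevosMulRel', Prod.lex_iff, and_or_left]

private lemma devosMulRel'_of_le (mul : #(x.1 * x.2) ≤ #(y.1 * y.2))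
    (hadd : #y.1 + #y.2 < #x.1 + #x.2) : DevosMulRel' x y :=
  devosMulRel'_iff.2 <| mul.lt_or_eq.imp_right fun h ↦ Or.inl ⟨h, hadd⟩

private lemma devosMulRel'_of_le_of_le (mul : #(x.1 * x.2) ≤ #(y.1 * y.2))
    (hadd : #y.1 + #y.2 ≤ #x.1 + #x.2) (hone : #x.1 < #y.1) : DevosMulRel' x y :=
  devosMulRel'_iff.2 <|
    mul.lt_or_eq.imp_right fun h ↦ hadd.lt_or_eq.imp (And.intro h) fun h' ↦ ⟨h, h'.symm, hone⟩

private lemma wellFoundedOn_devosMulRel' :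
    {x : Finset α × Finset α | x.1.Nonempty ∧ x.2.Nonempty}.WellFoundedOn
      (DevosMulRel' : Finset α × Finset α → Finset α × Finset α → Prop) := by
  refine wellFounded_lt.onFun.wellFoundedOn.prod_lex_of_wellFoundedOn_fiber fun n ↦
    Set.WellFoundedOn.prod_lex_of_wellFoundedOn_fiber ?_ fun n ↦
      wellFounded_lt.onFun.wellFoundedOn
  exact wellFounded_lt.onFun.wellFoundedOn.mono' fun x hx y _ ↦ tsub_lt_tsub_left_of_le <|
    add_le_add ((card_le_card_mul_right hx.1.2).trans_eq hx.2) <|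
      (card_le_card_mul_left hx.1.1).trans_eq hx.2

/-- An Olson-type theorem: either `|s * t| ≥ |s| + |t| - 1`, or `s * t` contains a left or
right coset of a nontrivial finite subgroup. -/
theorem olson (s t : Finset α) (hs : s.Nonempty) (ht : t.Nonempty) :
    HasCoset (s * t) ∨ #s + #t ≤ #(s * t) + 1 := by
  set x := (s, t) with hx
  clear_value x
  simp only [Prod.ext_iff] at hx
  obtain ⟨rfl, rfl⟩ := hx
  refine wellFoundedOn_devosMulRel'.induction (P := fun x : Finset α × Finset α ↦
    HasCoset (x.1 * x.2) ∨ #x.1 + #x.2 ≤ #(x.1 * x.2) + 1) ⟨hs, ht⟩ ?_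
  clear! x
  rintro ⟨s, t⟩ ⟨hs, ht⟩ ih
  simp only [Prod.forall, Set.mem_setOf_eq, and_imp] at *
  -- If `#t < #s`, use the induction hypothesis on `(t⁻¹, s⁻¹)`.
  obtain hts | hst := lt_or_ge #t #s
  · refine (ih _ _ ht.inv hs.inv
      (devosMulRel'_iff.2 <| Or.inr <| Or.inr <| by
        simp [← mul_inv_rev, add_comm, Finset.card_inv, hts])).imp ?_ ?_
    · intro h
      refine HasCoset.of_inv ?_
      rwa [mul_inv_rev]
    · intro h
      rw [← mul_inv_rev, Finset.card_inv, Finset.card_inv, Finset.card_inv, add_comm] at h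
      exact h
  -- If `s` is a singleton, the cardinality bound is trivial.
  obtain ⟨a, rfl⟩ | ⟨a, ha, b, hb, hab⟩ := hs.exists_eq_singleton_or_nontrivial
  · right
    rw [Finset.singleton_mul, Finset.card_smul_finset, Finset.card_singleton]
    omega
  obtain ⟨g, hg, hgs⟩ : ∃ g : α, g ≠ 1 ∧ (s ∩ op g • s).Nonempty :=
    ⟨b⁻¹ * a, inv_mul_eq_one.not.2 hab.symm, _,
      mem_inter.2 ⟨ha, mem_smul_finset.2 ⟨_, hb, by simp⟩⟩⟩
  -- If `s` equals its right translate by `g`, then `s * t` contains a coset.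
  obtain hsg | hsg := eq_or_ne (op g • s) s
  · left
    obtain ⟨t0, ht0⟩ := ht
    have key : ∀ n : ℤ, a * g ^ n ∈ s := by
      intro n
      refine zpow_induction_right (P := fun h : α ↦ a * h ∈ s) (by simpa using ha) ?_ ?_ n
      · intro c hc
        show a * (c * g) ∈ s
        rw [← mul_assoc, ← hsg]
        exact mem_smul_finset.2 ⟨a * c, hc, rfl⟩
      · intro c hc
        show a * (c * g⁻¹) ∈ s
        rw [← hsg] at hc
        obtain ⟨w, hw, hwe⟩ := mem_smul_finset.1 hc
        have h1 : w * g = a * c := hwe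
        have hw' : a * (c * g⁻¹) = w := by
          apply mul_right_cancel (b := g)
          rw [mul_assoc, mul_assoc, inv_mul_cancel, mul_one, h1]
        rw [← mul_assoc] at hw' ⊢
        rw [hw']
        exact hw
    set c : α := t0⁻¹ * g * t0⁻¹⁻¹ with hc
    have hczpow : ∀ n : ℤ, c ^ n = t0⁻¹ * g ^ n * t0 := by
      intro n
      rw [hc, conj_zpow, inv_inv]
    have hcoset : (fun y => (a * t0) * y) '' ((zpowers c : Subgroup α) : Set α)
        ⊆ ((s * t : Finset α) : Set α) := by
      rintro _ ⟨k, hk, rfl⟩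
      obtain ⟨n, rfl⟩ := mem_zpowers_iff.1 hk
      show a * t0 * c ^ n ∈ ((s * t : Finset α) : Set α)
      have heq : a * t0 * c ^ n = (a * g ^ n) * t0 := by
        rw [hczpow]; group
      rw [heq]
      exact_mod_cast mul_mem_mul (key n) ht0
    refine ⟨zpowers c, ?_, ?_, a * t0, Or.inl hcoset⟩
    · refine Set.Finite.of_finite_image ?_ (mul_right_injective (a * t0)).injOn
      exact Set.Finite.subset (s * t).finite_toSet hcoset
    · refine zpowers_ne_bot.2 ?_
      rw [hc]
      intro hc1
      apply hg
      have h2 := congrArg (fun x => t0⁻¹⁻¹ * x * t0⁻¹) hc1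
      simpa [mul_assoc] using h2
  replace hsg : #(s ∩ op g • s) < #s := card_lt_card ⟨inter_subset_left, fun h ↦
    hsg <| eq_of_superset_of_card_ge (h.trans inter_subset_right) (card_smul_finset _ _).le⟩
  replace aux1 := card_mono <| mulETransformLeft.fst_mul_snd_subset g (s, t)
  replace aux2 := card_mono <| mulETransformRight.fst_mul_snd_subset g (s, t)
  simp only [mulETransformLeft, mulETransformRight] at aux1 aux2
  obtain hgt | hgt := disjoint_or_nonempty_inter t (g⁻¹ • t)
  · right
    have h1 : #s + #t ≤ #t + #(g⁻¹ • t) := by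
      rw [card_smul_finset]
      omega
    have h2 : #t + #(g⁻¹ • t) = #(t ∪ g⁻¹ • t) := (card_union_of_disjoint hgt).symm
    have h3 : #(t ∪ g⁻¹ • t) ≤ #((s ∩ op g • s) * (t ∪ g⁻¹ • t)) := card_le_card_mul_left hgs
    calc #s + #t ≤ #((s ∩ op g • s) * (t ∪ g⁻¹ • t)) := by omega
      _ ≤ #(s * t) := aux1
      _ ≤ #(s * t) + 1 := Nat.le_succ _
  obtain hstg | hstg := le_or_lt_of_add_le_add (MulETransform.card g (s, t)).ge
  · refine (ih _ _ hgs (hgt.mono inter_subset_union) <|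
      devosMulRel'_of_le_of_le aux1 (by simpa [mulETransformLeft] using hstg) hsg).imp ?_ ?_
    · exact fun h ↦ h.mono (mulETransformLeft.fst_mul_snd_subset g (s, t))
    · intro h
      simp only [mulETransformLeft] at hstg
      omega
  · refine (ih _ _ (hgs.mono inter_subset_union) hgt <|
      devosMulRel'_of_le aux2 (by simpa [mulETransformRight] using hstg)).imp ?_ ?_
    · exact fun h ↦ h.mono (mulETransformRight.fst_mul_snd_subset g (s, t))
    · intro h
      simp only [mulETransformRight] at hstg
      omega

end OlsonAux

/-- A matching from a finite subset `A` to a finite subset `B` of a group `G` is a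
bijection `f : A → B` such that `a * f a ∉ A` for all `a ∈ A`. -/
def IsMatching {G : Type*} [Group G] (A B : Finset G) (f : ↥A ≃ ↥B) : Prop :=
  ∀ a : ↥A, (a : G) * (f a : G) ∉ A

/-- Let `G` be an arbitrary group and `A` a finite subset of `G` which does not contain
any left or right coset of any nontrivial proper finite subgroup of `G`. Then for any
finite subset `B` of `G` with `|A| = |B|` and `e ∉ B`, there is a matching from `A` to `B`. -/
theorem stmt0 {G : Type*} [Group G] (A : Finset G)
    (hA : ∀ H : Subgroup G, (H : Set G).Finite → H ≠ ⊥ → H ≠ ⊤ → ∀ x : G,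
      ¬ ((x * ·) '' (H : Set G) ⊆ (A : Set G)) ∧ ¬ ((· * x) '' (H : Set G) ⊆ (A : Set G)))
    (B : Finset G) (hcard : A.card = B.card) (hB : (1 : G) ∉ B) :
    ∃ f : ↥A ≃ ↥B, IsMatching A B f := by
  classical
  have hall : ∀ S : Finset ↥A,
      #S ≤ #(S.biUnion fun a => B.filter fun b => (a : G) * b ∉ A) := by
    intro S
    by_contra hS
    push_neg at hS
    set N := S.biUnion fun a => B.filter fun b => (a : G) * b ∉ A with hN
    have hNB : N ⊆ B := Finset.biUnion_subset.2 fun a _ => Finset.filter_subset _ _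
    have hSne : S.Nonempty := by
      rcases S.eq_empty_or_nonempty with rfl | h
      · simp at hS
      · exact h
    set S' : Finset G := S.image Subtype.val with hS'
    have hS'card : #S' = #S := Finset.card_image_of_injective _ Subtype.val_injective
    set T : Finset G := insert 1 (B \ N) with hT
    have h1 : (1 : G) ∉ B \ N := fun h => hB (Finset.mem_sdiff.1 h).1
    have hTcard : #T = #B - #N + 1 := by
      rw [hT, Finset.card_insert_of_notMem h1, Finset.card_sdiff_of_subset hNB]
    have hmul : S' * T ⊆ A := by
      intro x hx
      obtain ⟨a', ha', τ, hτ, rfl⟩ := Finset.mem_mul.1 hx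
      obtain ⟨a, haS, rfl⟩ := Finset.mem_image.1 ha'
      rcases Finset.mem_insert.1 hτ with rfl | hτ
      · simpa using a.2
      · obtain ⟨hτB, hτN⟩ := Finset.mem_sdiff.1 hτ
        by_contra hcontra
        exact hτN (Finset.mem_biUnion.2 ⟨a, haS, Finset.mem_filter.2 ⟨hτB, hcontra⟩⟩)
    have hTne : T.Nonempty := Finset.insert_nonempty _ _
    have hS'ne : S'.Nonempty := hSne.image _
    have hcard2 : #A + 2 ≤ #S' + #T := by
      have hNle : #N ≤ #B := Finset.card_le_card hNB
      omega
    have hle : #(S' * T) ≤ #A := Finset.card_le_card hmul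
    rcases olson S' T hS'ne hTne with hc | hnum
    · obtain ⟨H, hHfin, hHbot, z, hz⟩ := hc.mono hmul
      by_cases hHtop : H = ⊤
      · subst hHtop
        have hGfin : Finite G := by
          rw [Subgroup.coe_top] at hHfin
          exact Set.finite_univ_iff.1 hHfin
        have := Fintype.ofFinite G
        have hAuniv : A = Finset.univ := by
          refine Finset.eq_univ_iff_forall.2 fun y => ?_
          rcases hz with hz | hz
          · have : (y : G) ∈ (A : Set G) := hz ⟨z⁻¹ * y, by simp, by simp⟩
            exact_mod_cast this
          · have : (y : G) ∈ (A : Set G) := hz ⟨y * z⁻¹, by simp, by simp⟩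
            exact_mod_cast this
        have hBuniv : B = Finset.univ := by
          apply Finset.eq_univ_of_card
          rw [← hcard, hAuniv, Finset.card_univ]
        exact hB (hBuniv ▸ Finset.mem_univ 1)
      · rcases hz with hz | hz
        · exact (hA H hHfin hHbot hHtop z).1 hz
        · exact (hA H hHfin hHbot hHtop z).2 hz
    · omega
  obtain ⟨f, hfinj, hf⟩ := (Finset.all_card_le_biUnion_card_iff_exists_injective _).1 hall
  let f' : ↥A → ↥B := fun a => ⟨f a, (Finset.mem_filter.1 (hf a)).1⟩
  have hinj' : Function.Injective f' := fun a b h => hfinj (congrArg Subtype.val h)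
  have hbij : Function.Bijective f' := (Fintype.bijective_iff_injective_and_card f').2
    ⟨hinj', by simpa [Fintype.card_coe] using hcard⟩
  exact ⟨Equiv.ofBijective f' hbij, fun a => (Finset.mem_filter.1 (hf a)).2⟩
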